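/- Let G be a tree with at least two vertices and let S be a critical set of G. Then S contains at least two pendant vertices of G, i.e., at least two vertices v ∈ S with deg_G(v) = 1. -/

import Mathlib

open Matrix
open scoped Classical

/-- `S` is a critical set of `G`: `S` is nonempty and there is a nonzero eigenvector of the
Laplacian of `G` vanishing outside `S`. -/
def IsCriticalSet {V : Type*} [Fintype V] [DecidableEq V] (G : SimpleGraph V) (S : Set V) :
    Prop :=
  S.Nonempty ∧ ∃ (lam : ℝ) (y : V → ℝ), y ≠ 0 ∧
    G.lapMatrix ℝ *ᵥ y = lam • y ∧ ∀ v ∉ S, y v = 0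

/-- `S` is a perfect critical set of `G`: some inducing eigenvector vanishes outside `S` and is
nonzero at every vertex of `S`. -/
def IsPerfectCriticalSet {V : Type*} [Fintype V] [DecidableEq V] (G : SimpleGraph V)
    (S : Set V) : Prop :=
  S.Nonempty ∧ ∃ (lam : ℝ) (y : V → ℝ), y ≠ 0 ∧
    G.lapMatrix ℝ *ᵥ y = lam • y ∧ (∀ v ∉ S, y v = 0) ∧ ∀ v ∈ S, y v ≠ 0

/-- `S` is a minimal perfect critical set of `G`: a perfect critical set none of whose proper
subsets is a perfect critical set. -/
def IsMinimalPerfectCriticalSet {V : Type*} [Fintype V] [DecidableEq V] (G : SimpleGraph V)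
    (S : Set V) : Prop :=
  IsPerfectCriticalSet G S ∧ ∀ T : Set V, T ⊂ S → ¬ IsPerfectCriticalSet G T

section Aux

variable {V : Type*} {G : SimpleGraph V}

private lemma aux_dist_lt_of_mem_support (hc : G.Connected) {r a x : V} (p : G.Walk r a)
    (hlen : p.length = G.dist r a) (hx : x ∈ p.support) (hxa : x ≠ a) :
    G.dist r x < G.dist r a := by
  have h1 : G.dist r x ≤ (p.takeUntil x hx).length := SimpleGraph.dist_le _
  have h2 : G.dist x a ≤ (p.dropUntil x hx).length := SimpleGraph.dist_le _
  have h3 : (p.takeUntil x hx).length + (p.dropUntil x hx).length = p.length := by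
    rw [← SimpleGraph.Walk.length_append, SimpleGraph.Walk.take_spec]
  have h4 : 0 < G.dist x a := hc.pos_dist_of_ne hxa
  omega

private lemma aux_isPath_concat {r a c : V} {p : G.Walk r a} (hp : p.IsPath) (h : G.Adj a c)
    (hc : c ∉ p.support) : (p.concat h).IsPath := by
  rw [← SimpleGraph.Walk.isPath_reverse_iff, SimpleGraph.Walk.reverse_concat]
  refine hp.reverse.cons ?_
  simpa [SimpleGraph.Walk.support_reverse] using hc

private lemma aux_tree_dist_ne_of_adj (hG : G.IsTree) (r : V) {u c : V} (h : G.Adj u c) :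
    G.dist r u ≠ G.dist r c := by
  intro hd
  have hconn := hG.isConnected
  obtain ⟨p, hp, hlen⟩ := hconn.exists_path_of_dist r u
  by_cases hcs : c ∈ p.support
  · have := aux_dist_lt_of_mem_support hconn p hlen hcs h.ne'
    omega
  · obtain ⟨q, hq, hlenq⟩ := hconn.exists_path_of_dist r c
    have hP : (p.concat h).IsPath := aux_isPath_concat hp h hcs
    have heq : p.concat h = q := ((hG.existsUnique_path r c).unique hP hq)
    have hl : (p.concat h).length = q.length := by rw [heq]
    rw [SimpleGraph.Walk.length_concat] at hl
    omega

private lemma aux_tree_parent_unique (hG : G.IsTree) {r c a b : V} (ha : G.Adj a c)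
    (hb : G.Adj b c) (hda : G.dist r a + 1 = G.dist r c) (hdb : G.dist r b + 1 = G.dist r c) :
    a = b := by
  have hconn := hG.isConnected
  obtain ⟨p, hp, hlp⟩ := hconn.exists_path_of_dist r a
  obtain ⟨q, hq, hlq⟩ := hconn.exists_path_of_dist r b
  have hcp : c ∉ p.support := by
    intro hc
    have := aux_dist_lt_of_mem_support hconn p hlp hc ha.ne'
    omega
  have hcq : c ∉ q.support := by
    intro hc
    have := aux_dist_lt_of_mem_support hconn q hlq hc hb.ne'
    omega
  have hPa : (p.concat ha).IsPath := aux_isPath_concat hp ha hcp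
  have hPb : (q.concat hb).IsPath := aux_isPath_concat hq hb hcq
  have heq : p.concat ha = q.concat hb := (hG.existsUnique_path r c).unique hPa hPb
  have h1 : (p.concat ha).reverse.getVert 1 = a := by
    rw [SimpleGraph.Walk.reverse_concat]
    exact (SimpleGraph.Walk.getVert_cons_succ _ _).trans (SimpleGraph.Walk.getVert_zero _)
  have h2 : (q.concat hb).reverse.getVert 1 = b := by
    rw [SimpleGraph.Walk.reverse_concat]
    exact (SimpleGraph.Walk.getVert_cons_succ _ _).trans (SimpleGraph.Walk.getVert_zero _)
  rw [← h1, ← h2, heq]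

end Aux

/-- Proposition 4: a critical set of a tree with at least two vertices contains at least two
pendant vertices. -/
theorem critical_set_of_tree_contains_two_pendants {V : Type*} [Fintype V] [DecidableEq V]
    (G : SimpleGraph V) (hG : G.IsTree) (hcard : 2 ≤ Fintype.card V)
    (S : Set V) (hS : IsCriticalSet G S) :
    ∃ u ∈ S, ∃ w ∈ S, u ≠ w ∧ G.degree u = 1 ∧ G.degree w = 1 := by
  obtain ⟨hSne, lam, y, hy0, heig, hout⟩ := hS
  have hconn := hG.isConnected
  have hNe : Nonempty V := Fintype.card_pos_iff.mp (by omega)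
  have heq : ∀ v, (G.degree v : ℝ) * y v - ∑ u ∈ G.neighborFinset v, y u = lam * y v := by
    intro v
    have h := congrFun heig v
    rwa [SimpleGraph.lapMatrix_mulVec_apply, Pi.smul_apply, smul_eq_mul] at h
  have hadj_ex : ∀ v : V, ∃ c, G.Adj v c := by
    intro v
    obtain ⟨w, hw⟩ := Fintype.exists_ne_of_one_lt_card (by omega) v
    obtain ⟨p⟩ := hconn.preconnected v w
    have hl : 0 < p.length := by
      rcases Nat.eq_zero_or_pos p.length with h | h
      · exact absurd (SimpleGraph.Walk.eq_of_length_eq_zero h).symm hw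
      · exact h
    have := p.adj_getVert_succ (i := 0) hl
    rw [SimpleGraph.Walk.getVert_zero] at this
    exact ⟨_, this⟩
  have key : ∀ r : V, ∃ v, y v ≠ 0 ∧ G.degree v = 1 ∧ v ≠ r := by
    intro r
    have hsne : (Finset.univ.filter fun v => y v ≠ 0).Nonempty := by
      obtain ⟨a, ha⟩ := Function.ne_iff.mp hy0
      exact ⟨a, by simpa using ha⟩
    obtain ⟨v, hv, hmax⟩ :=
      Finset.exists_max_image (Finset.univ.filter fun v => y v ≠ 0) (fun v => G.dist r v) hsne
    have hv0 : y v ≠ 0 := by simpa using hv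
    have hmax' : ∀ x, y x ≠ 0 → G.dist r x ≤ G.dist r v := by
      intro x hx
      exact hmax x (by simpa using hx)
    set M := G.dist r v with hM
    have far : ∀ c, G.Adj v c → G.dist r c = M + 1 → False := by
      intro c hvc hdc
      have hyc : y c = 0 := by
        by_contra h
        have := hmax' c h
        omega
      have hsum : ∑ u ∈ G.neighborFinset c, y u = 0 := by
        have h := heq c
        rw [hyc] at h
        simpa using h.symm
      have honly : ∀ u ∈ G.neighborFinset c, u ≠ v → y u = 0 := by
        intro u hu hne
        have huc : G.Adj c u := (G.mem_neighborFinset c u).mp hu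
        by_contra hyu
        have h1 : G.dist r u ≤ M := hmax' u hyu
        have h2 : G.dist r c ≤ G.dist r u + 1 := by
          have ht := hconn.dist_triangle (u := r) (v := u) (w := c)
          rwa [SimpleGraph.dist_eq_one_iff_adj.mpr huc.symm] at ht
        have h3 : G.dist r u = M := by omega
        exact hne (aux_tree_parent_unique hG (r := r) huc.symm hvc (by omega) (by omega))
      have hv_mem : v ∈ G.neighborFinset c := (G.mem_neighborFinset c v).mpr hvc.symm
      have hsv : ∑ u ∈ G.neighborFinset c, y u = y v :=
        Finset.sum_eq_single_of_mem v hv_mem honly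
      rw [hsv] at hsum
      exact hv0 hsum
    have hvr : v ≠ r := by
      intro h
      obtain ⟨c, hc⟩ := hadj_ex v
      refine far c hc ?_
      have h0 : M = 0 := by rw [hM, h, SimpleGraph.dist_self]
      have h1 : G.dist v c = 1 := SimpleGraph.dist_eq_one_iff_adj.mpr hc
      rw [h] at h1
      omega
    have hMpos : 0 < M := hconn.pos_dist_of_ne (Ne.symm hvr)
    have hdeg : G.degree v = 1 := by
      obtain ⟨c0, hc0⟩ := hadj_ex v
      have hnbr : ∀ c, G.Adj v c → G.dist r c + 1 = M := by
        intro c hc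
        have hne := aux_tree_dist_ne_of_adj hG r hc
        have hub : G.dist r c ≤ M + 1 := by
          have ht := hconn.dist_triangle (u := r) (v := v) (w := c)
          rwa [SimpleGraph.dist_eq_one_iff_adj.mpr hc] at ht
        have hlb : M ≤ G.dist r c + 1 := by
          have ht := hconn.dist_triangle (u := r) (v := c) (w := v)
          rwa [SimpleGraph.dist_eq_one_iff_adj.mpr hc.symm] at ht
        have hfar : G.dist r c ≠ M + 1 := fun hh => far c hc hh
        omega
      have hset : G.neighborFinset v = {c0} := by
        apply Finset.eq_singleton_iff_unique_mem.mpr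
        refine ⟨(G.mem_neighborFinset v c0).mpr hc0, ?_⟩
        intro x hx
        have hvx := (G.mem_neighborFinset v x).mp hx
        exact aux_tree_parent_unique hG (r := r) hvx.symm hc0.symm (hnbr x hvx) (hnbr c0 hc0)
      rw [← SimpleGraph.card_neighborFinset_eq_degree, hset, Finset.card_singleton]
    exact ⟨v, hv0, hdeg, hvr⟩
  obtain ⟨u, hyu, hdu, _⟩ := key (Classical.arbitrary V)
  obtain ⟨w, hyw, hdw, hwu⟩ := key u
  have hus : u ∈ S := by
    by_contra h
    exact hyu (hout u h)
  have hws : w ∈ S := by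
    by_contra h
    exact hyw (hout w h)
  exact ⟨u, hus, w, hws, Ne.symm hwu, hdu, hdw⟩
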